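/- Let D ≥ 2 and n ≥ 1 be integers and let l_1, …, l_n be positive integers satisfying the Kraft equality Σ_{i=1}^n D^{−l_i} = 1. Then max_i l_i ≤ (n−1)/(D−1). (Hence imposing the maximum codeword length ⌈(n−1)/(D−1)⌉ is a trivial, non-binding constraint.) -/

import Mathlib

/-- If D ≥ 2, n ≥ 1 and positive integers l_1,…,l_n satisfy the Kraft
equality Σ D^{−l_i} = 1, then max_i l_i ≤ (n−1)/(D−1). -/
theorem statement8 (D n : ℕ) (hD : 2 ≤ D) (hn : 1 ≤ n)
    (l : Fin n → ℕ) (hpos : ∀ i, 1 ≤ l i)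
    (hkraft : ∑ i, (D : ℝ) ^ (-(l i : ℤ)) = 1) :
    ∀ i, (l i : ℝ) ≤ ((n : ℝ) - 1) / ((D : ℝ) - 1) := by
  intro i
  have hD1 : (1:ℝ) < (D:ℝ) := by exact_mod_cast hD
  have hDpos : (0:ℝ) < (D:ℝ) := by linarith
  have hDne : (D:ℝ) ≠ 0 := ne_of_gt hDpos
  have hD1' : (0:ℝ) < (D:ℝ) - 1 := by linarith
  set L := l i with hL
  set B : ℕ → ℝ := fun d =>
    ∑ j ∈ Finset.univ.filter (fun j => d < l j), (D:ℝ) ^ ((d:ℤ) - (l j:ℤ)) with hB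
  -- Key: each B d (for d < L) is a positive integer, hence ≥ 1
  have key : ∀ d, d < L → (1:ℝ) ≤ B d := by
    intro d hd
    have hsplit := Finset.sum_filter_add_sum_filter_not Finset.univ
      (fun j => d < l j) (fun j => (D:ℝ) ^ (-(l j : ℤ)))
    rw [hkraft] at hsplit
    set m : ℕ := ∑ j ∈ Finset.univ.filter (fun j => ¬ d < l j), D ^ (d - l j) with hm
    have h1 : B d = (D:ℝ)^d * ∑ j ∈ Finset.univ.filter (fun j => d < l j),
        (D:ℝ) ^ (-(l j : ℤ)) := by
      rw [hB, Finset.mul_sum]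
      refine Finset.sum_congr rfl fun j hj => ?_
      rw [← zpow_natCast (D:ℝ) d, ← zpow_add₀ hDne]
      ring_nf
    have h2 : (m:ℝ) = (D:ℝ)^d * ∑ j ∈ Finset.univ.filter (fun j => ¬ d < l j),
        (D:ℝ) ^ (-(l j : ℤ)) := by
      rw [hm, Nat.cast_sum, Finset.mul_sum]
      refine Finset.sum_congr rfl fun j hj => ?_
      have hle : l j ≤ d := Nat.le_of_not_lt (Finset.mem_filter.mp hj).2
      rw [Nat.cast_pow, ← zpow_natCast (D:ℝ) (d - l j), Nat.cast_sub hle,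
        ← zpow_natCast (D:ℝ) d, ← zpow_add₀ hDne]
      ring_nf
    have hBm : B d + (m:ℝ) = (D:ℝ)^d := by
      rw [h1, h2, ← mul_add, hsplit, mul_one]
    have hBpos : 0 < B d := by
      rw [hB]
      refine Finset.sum_pos' (fun j _ => by positivity) ⟨i, ?_, by positivity⟩
      simp [hd]; exact hd
    have hmlt : m < D ^ d := by
      have : (m:ℝ) < ((D ^ d : ℕ) : ℝ) := by push_cast; linarith
      exact_mod_cast this
    have : ((m:ℝ)) + 1 ≤ ((D ^ d : ℕ) : ℝ) := by exact_mod_cast hmlt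
    push_cast at this
    linarith
  -- swap sums
  have hswap : ∑ d ∈ Finset.range L, B d
      = ∑ j, ∑ d ∈ Finset.range (min L (l j)), (D:ℝ)^((d:ℤ) - (l j:ℤ)) := by
    rw [hB]
    simp_rw [Finset.sum_filter]
    rw [Finset.sum_comm]
    refine Finset.sum_congr rfl fun j _ => ?_
    rw [← Finset.sum_filter]
    congr 1
    ext d
    simp [Nat.lt_min]
  -- per-j bound
  have hjb : ∀ j : Fin n, ((D:ℝ)-1) * ∑ d ∈ Finset.range (min L (l j)), (D:ℝ)^((d:ℤ)-(l j:ℤ))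
      ≤ 1 - (D:ℝ)^(-(l j:ℤ)) := by
    intro j
    set m := min L (l j) with hmdef
    have hml : m ≤ l j := min_le_right _ _
    have h1 : ∑ d ∈ Finset.range m, (D:ℝ)^((d:ℤ)-(l j:ℤ))
        = (D:ℝ)^(-(l j:ℤ)) * ∑ d ∈ Finset.range m, (D:ℝ)^(d:ℕ) := by
      rw [Finset.mul_sum]
      refine Finset.sum_congr rfl fun d _ => ?_
      rw [← zpow_natCast (D:ℝ) d, ← zpow_add₀ hDne]
      ring_nf
    have h2 : ((D:ℝ)-1) * ∑ d ∈ Finset.range m, (D:ℝ)^(d:ℕ) = (D:ℝ)^m - 1 := by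
      rw [geom_sum_eq (ne_of_gt hD1)]
      field_simp
    have h3 : (D:ℝ)^((m:ℤ) - (l j:ℤ)) ≤ 1 := by
      apply zpow_le_one_of_nonpos₀ (le_of_lt hD1)
      omega
    have h4 : (D:ℝ)^(-(l j:ℤ)) * ((D:ℝ)^m - 1) = (D:ℝ)^((m:ℤ) - (l j:ℤ)) - (D:ℝ)^(-(l j:ℤ)) := by
      rw [mul_sub, mul_one, ← zpow_natCast (D:ℝ) m, ← zpow_add₀ hDne]
      ring_nf
    calc ((D:ℝ)-1) * ∑ d ∈ Finset.range m, (D:ℝ)^((d:ℤ)-(l j:ℤ))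
        = (D:ℝ)^(-(l j:ℤ)) * (((D:ℝ)-1) * ∑ d ∈ Finset.range m, (D:ℝ)^(d:ℕ)) := by
          rw [h1]; ring
      _ = (D:ℝ)^((m:ℤ) - (l j:ℤ)) - (D:ℝ)^(-(l j:ℤ)) := by rw [h2, h4]
      _ ≤ 1 - (D:ℝ)^(-(l j:ℤ)) := by linarith
  -- combine
  have hLsum : (L:ℝ) ≤ ∑ d ∈ Finset.range L, B d := by
    calc (L:ℝ) = ∑ _d ∈ Finset.range L, (1:ℝ) := by simp
      _ ≤ ∑ d ∈ Finset.range L, B d :=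
          Finset.sum_le_sum fun d hd => key d (Finset.mem_range.mp hd)
  have hmain : ((D:ℝ)-1) * ∑ d ∈ Finset.range L, B d ≤ (n:ℝ) - 1 := by
    rw [hswap, Finset.mul_sum]
    calc ∑ j, ((D:ℝ)-1) * ∑ d ∈ Finset.range (min L (l j)), (D:ℝ)^((d:ℤ)-(l j:ℤ))
        ≤ ∑ j : Fin n, (1 - (D:ℝ)^(-(l j:ℤ))) := Finset.sum_le_sum fun j _ => hjb j
      _ = (n:ℝ) - 1 := by
          rw [Finset.sum_sub_distrib, hkraft]
          simp
  have hfin : ((D:ℝ)-1) * (L:ℝ) ≤ (n:ℝ) - 1 := by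
    nlinarith [hLsum, hmain, hD1']
  rw [le_div_iff₀ hD1']
  linarith
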